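/- For any discrete random variables A, B, C on finite spaces, |J(A; (B,C)) − J(A; C | B)| ≤ J(A; B). -/

import Mathlib

open scoped Classical BigOperators

/-- `μ` is a probability mass function on a finite type. -/
def IsPMF {Ω : Type*} [Fintype Ω] (μ : Ω → ℝ) : Prop :=
  (∀ ω, 0 ≤ μ ω) ∧ ∑ ω, μ ω = 1

/-- Probability that the random variable `X` takes the value `a` under `μ`. -/
noncomputable def pr {Ω α : Type*} [Fintype Ω] (μ : Ω → ℝ) (X : Ω → α) (a : α) : ℝ :=
  ∑ ω, if X ω = a then μ ω else 0

/-- Variational information `J(X;Y)`: total variation distance between the joint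
law of `(X,Y)` and the product of the marginal laws. -/
noncomputable def vinfo {Ω α β : Type*} [Fintype Ω] [Fintype α] [Fintype β]
    (μ : Ω → ℝ) (X : Ω → α) (Y : Ω → β) : ℝ :=
  (1/2) * ∑ a, ∑ b, |pr μ (fun ω => (X ω, Y ω)) (a, b) - pr μ X a * pr μ Y b|

/-- Conditional variational information `J(X;Y|W)`:
`E_W[d_TV(P(X,Y|W), P(X|W)⊗P(Y|W))]`. -/
noncomputable def condVinfo {Ω α β γ : Type*} [Fintype Ω] [Fintype α] [Fintype β] [Fintype γ]
    (μ : Ω → ℝ) (X : Ω → α) (Y : Ω → β) (W : Ω → γ) : ℝ :=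
  (1/2) * ∑ c, ∑ a, ∑ b,
    |pr μ (fun ω => (X ω, Y ω, W ω)) (a, b, c) -
      pr μ (fun ω => (X ω, W ω)) (a, c) * pr μ (fun ω => (Y ω, W ω)) (b, c) / pr μ W c|

lemma pr_congr {Ω α β : Type*} [Fintype Ω] (μ : Ω → ℝ) (X : Ω → α) (Y : Ω → β)
    (a : α) (b : β) (h : ∀ ω, X ω = a ↔ Y ω = b) : pr μ X a = pr μ Y b :=
  Finset.sum_congr rfl fun ω _ => if_congr (h ω) rfl rfl

lemma pr_nonneg {Ω α : Type*} [Fintype Ω] (μ : Ω → ℝ) (h : ∀ ω, 0 ≤ μ ω)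
    (X : Ω → α) (a : α) : 0 ≤ pr μ X a :=
  Finset.sum_nonneg fun ω _ => by split <;> simp [h ω]

lemma pr_fst {Ω α β : Type*} [Fintype Ω] [Fintype β] (μ : Ω → ℝ)
    (X : Ω → α) (Y : Ω → β) (a : α) :
    ∑ b, pr μ (fun ω => (X ω, Y ω)) (a, b) = pr μ X a := by
  unfold pr
  rw [Finset.sum_comm]
  refine Finset.sum_congr rfl fun ω _ => ?_
  by_cases h : X ω = a
  · simp [h, Prod.ext_iff]
  · simp [h, Prod.ext_iff]

lemma pr_eq_zero {Ω α β : Type*} [Fintype Ω] (μ : Ω → ℝ) (hμ0 : ∀ ω, 0 ≤ μ ω)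
    (X : Ω → α) (a : α) (h : pr μ X a = 0) (Z : Ω → β) (z : β)
    (himp : ∀ ω, Z ω = z → X ω = a) : pr μ Z z = 0 := by
  have hω : ∀ ω, X ω = a → μ ω = 0 := by
    intro ω hx
    have h0 := (Finset.sum_eq_zero_iff_of_nonneg
      (fun ω _ => by split <;> simp [hμ0 ω])).mp h ω (Finset.mem_univ ω)
    simpa [hx] using h0
  refine Finset.sum_eq_zero fun ω _ => ?_
  by_cases hz : Z ω = z
  · simp [hz, hω ω (himp ω hz)]
  · simp [hz]

/-- Tightness of the chain rule: `|J(A;(B,C)) − J(A;C|B)| ≤ J(A;B)`. -/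
theorem chain_rule_tight₁ {Ω 𝒜 ℬ 𝒞 : Type*} [Fintype Ω] [Fintype 𝒜] [Fintype ℬ] [Fintype 𝒞]
    (μ : Ω → ℝ) (hμ : IsPMF μ) (A : Ω → 𝒜) (B : Ω → ℬ) (C : Ω → 𝒞) :
    |vinfo μ A (fun ω => (B ω, C ω)) - condVinfo μ A C B| ≤ vinfo μ A B := by
  obtain ⟨hμ0, _⟩ := hμ
  set P3 : 𝒜 → ℬ → 𝒞 → ℝ := fun a b c => pr μ (fun ω => (A ω, C ω, B ω)) (a, c, b) with hP3
  set Pbc : ℬ → 𝒞 → ℝ := fun b c => pr μ (fun ω => (B ω, C ω)) (b, c) with hPbc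
  set Pab : 𝒜 → ℬ → ℝ := fun a b => pr μ (fun ω => (A ω, B ω)) (a, b) with hPab
  set Pa : 𝒜 → ℝ := fun a => pr μ A a with hPa
  set Pb : ℬ → ℝ := fun b => pr μ B b with hPb
  -- rewrite vinfo μ A (B,C)
  have h1 : vinfo μ A (fun ω => (B ω, C ω)) =
      (1/2) * ∑ a, ∑ b, ∑ c, |P3 a b c - Pa a * Pbc b c| := by
    unfold vinfo
    congr 1
    refine Finset.sum_congr rfl fun a _ => ?_
    rw [Fintype.sum_prod_type]
    refine Finset.sum_congr rfl fun b _ => Finset.sum_congr rfl fun c _ => ?_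
    have : pr μ (fun ω => (A ω, (B ω, C ω))) (a, (b, c)) = P3 a b c :=
      pr_congr _ _ _ _ _ fun ω => by simp [Prod.ext_iff]; tauto
    rw [this]
  -- rewrite condVinfo
  have h2 : condVinfo μ A C B =
      (1/2) * ∑ a, ∑ b, ∑ c, |P3 a b c - Pab a b * Pbc b c / Pb b| := by
    unfold condVinfo
    congr 1
    rw [Finset.sum_comm]
    refine Finset.sum_congr rfl fun a _ => ?_
    refine Finset.sum_congr rfl fun b _ => Finset.sum_congr rfl fun c _ => ?_
    have e1 : pr μ (fun ω => (C ω, B ω)) (c, b) = Pbc b c :=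
      pr_congr _ _ _ _ _ fun ω => by simp [Prod.ext_iff]; tauto
    rw [e1]
  -- key pointwise bound
  have key : ∀ a b, abs ((∑ c, |P3 a b c - Pa a * Pbc b c|) -
      ∑ c, |P3 a b c - Pab a b * Pbc b c / Pb b|) ≤ |Pab a b - Pa a * Pb b| := by
    intro a b
    have habs : ∀ c : 𝒞, abs (|P3 a b c - Pa a * Pbc b c| - |P3 a b c - Pab a b * Pbc b c / Pb b|)
        ≤ |Pab a b * Pbc b c / Pb b - Pa a * Pbc b c| := by
      intro c
      calc abs (|P3 a b c - Pa a * Pbc b c| - |P3 a b c - Pab a b * Pbc b c / Pb b|)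
          ≤ |(P3 a b c - Pa a * Pbc b c) - (P3 a b c - Pab a b * Pbc b c / Pb b)| :=
            abs_abs_sub_abs_le_abs_sub _ _
        _ = |Pab a b * Pbc b c / Pb b - Pa a * Pbc b c| := by ring_nf
    calc abs ((∑ c, |P3 a b c - Pa a * Pbc b c|) - ∑ c, |P3 a b c - Pab a b * Pbc b c / Pb b|)
        = abs (∑ c, (|P3 a b c - Pa a * Pbc b c| - |P3 a b c - Pab a b * Pbc b c / Pb b|)) := by
          rw [Finset.sum_sub_distrib]
      _ ≤ ∑ c, abs (|P3 a b c - Pa a * Pbc b c| - |P3 a b c - Pab a b * Pbc b c / Pb b|) :=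
          Finset.abs_sum_le_sum_abs _ _
      _ ≤ ∑ c, |Pab a b * Pbc b c / Pb b - Pa a * Pbc b c| :=
          Finset.sum_le_sum fun c _ => habs c
      _ ≤ |Pab a b - Pa a * Pb b| := ?_
    by_cases hb : Pb b = 0
    · -- everything vanishes
      have hbc : ∀ c, Pbc b c = 0 := fun c =>
        pr_eq_zero μ hμ0 B b hb _ _ (fun ω h => by simpa using congrArg Prod.fst h)
      have hab : Pab a b = 0 :=
        pr_eq_zero μ hμ0 B b hb _ _ (fun ω h => by simpa using congrArg Prod.snd h)
      simp [hab, hb, hbc]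
    · have hstep : ∀ c, |Pab a b * Pbc b c / Pb b - Pa a * Pbc b c|
          = Pbc b c * |Pab a b / Pb b - Pa a| := by
        intro c
        have : Pab a b * Pbc b c / Pb b - Pa a * Pbc b c
            = Pbc b c * (Pab a b / Pb b - Pa a) := by ring
        rw [this, abs_mul, abs_of_nonneg (pr_nonneg μ hμ0 _ _)]
      have hsum : ∑ c, Pbc b c = Pb b := pr_fst μ B C b
      calc ∑ c, |Pab a b * Pbc b c / Pb b - Pa a * Pbc b c|
          = ∑ c, Pbc b c * |Pab a b / Pb b - Pa a| := Finset.sum_congr rfl fun c _ => hstep c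
        _ = Pb b * |Pab a b / Pb b - Pa a| := by rw [← Finset.sum_mul, hsum]
        _ = |Pb b * (Pab a b / Pb b - Pa a)| := by
            rw [abs_mul, abs_of_nonneg (pr_nonneg μ hμ0 _ _)]
        _ = |Pab a b - Pa a * Pb b| := by
            congr 1
            field_simp
        _ ≤ |Pab a b - Pa a * Pb b| := le_rfl
  -- assemble
  rw [h1, h2, ← mul_sub]
  rw [show vinfo μ A B = (1/2) * ∑ a, ∑ b, |Pab a b - Pa a * Pb b| from rfl]
  rw [abs_mul]
  have h12 : |(1:ℝ)/2| = 1/2 := by norm_num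
  rw [h12]
  apply mul_le_mul_of_nonneg_left _ (by norm_num : (0:ℝ) ≤ 1/2)
  calc abs ((∑ a, ∑ b, ∑ c, |P3 a b c - Pa a * Pbc b c|) -
        ∑ a, ∑ b, ∑ c, |P3 a b c - Pab a b * Pbc b c / Pb b|)
      = abs (∑ a, ∑ b, ((∑ c, |P3 a b c - Pa a * Pbc b c|) -
          ∑ c, |P3 a b c - Pab a b * Pbc b c / Pb b|)) := by
        rw [← Finset.sum_sub_distrib]
        congr 1
        exact Finset.sum_congr rfl fun a _ => (Finset.sum_sub_distrib _ _).symm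
    _ ≤ ∑ a, ∑ b, abs ((∑ c, |P3 a b c - Pa a * Pbc b c|) -
          ∑ c, |P3 a b c - Pab a b * Pbc b c / Pb b|) := by
        calc _ ≤ ∑ a, abs (∑ b, ((∑ c, |P3 a b c - Pa a * Pbc b c|) -
              ∑ c, |P3 a b c - Pab a b * Pbc b c / Pb b|)) := Finset.abs_sum_le_sum_abs _ _
          _ ≤ _ := Finset.sum_le_sum fun a _ => Finset.abs_sum_le_sum_abs _ _
    _ ≤ ∑ a, ∑ b, |Pab a b - Pa a * Pb b| :=
        Finset.sum_le_sum fun a _ => Finset.sum_le_sum fun b _ => key a b
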